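/- Let X be symmetric positive definite, τ ∈ [0,1), u a vector, and M symmetric with (1−τ)X⁻¹ ⪯ M ⪯ (1+τ)X⁻¹. Then |1/(1 + uᵀMu) − 1/(1 + uᵀX⁻¹u)| ≤ (τ/(1−τ)) · 1/(1 + uᵀX⁻¹u). -/

import Mathlib

open Matrix

/-- If `(1−τ)X⁻¹ ⪯ M ⪯ (1+τ)X⁻¹` with `τ ∈ [0,1)`, then
`|1/(1 + uᵀMu) − 1/(1 + uᵀX⁻¹u)| ≤ (τ/(1−τ)) · 1/(1 + uᵀX⁻¹u)`. -/
theorem denom_approx (n : ℕ) (X M : Matrix (Fin n) (Fin n) ℝ)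
    (hXsymm : X.IsSymm) (hX : X.PosDef) (hMsymm : M.IsSymm)
    (τ : ℝ) (hτ0 : 0 ≤ τ) (hτ : τ < 1) (u : Fin n → ℝ)
    (hlow : (M - (1 - τ) • X⁻¹).PosSemidef)
    (hup : ((1 + τ) • X⁻¹ - M).PosSemidef) :
    |1 / (1 + u ⬝ᵥ M.mulVec u) - 1 / (1 + u ⬝ᵥ X⁻¹.mulVec u)| ≤
      (τ / (1 - τ)) * (1 / (1 + u ⬝ᵥ X⁻¹.mulVec u)) := by
  set a := u ⬝ᵥ X⁻¹.mulVec u with ha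
  set b := u ⬝ᵥ M.mulVec u with hb
  have hainv : X⁻¹.PosDef := hX.inv
  have ha0 : 0 ≤ a := hainv.posSemidef.dotProduct_mulVec_nonneg u
  have h1 := hlow.dotProduct_mulVec_nonneg u
  have h2 := hup.dotProduct_mulVec_nonneg u
  simp only [sub_mulVec, smul_mulVec, dotProduct_sub, dotProduct_smul,
    star_trivial, smul_eq_mul, ← ha, ← hb] at h1 h2
  -- h1 : 0 ≤ b - (1 - τ) * a,  h2 : 0 ≤ (1 + τ) * a - b
  have hτ1 : 0 < 1 - τ := by linarith
  have hA : 0 < 1 + a := by linarith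
  have hB : 0 < 1 + b := by nlinarith
  rw [abs_le, mul_one_div, div_div]
  constructor
  · rw [div_sub_div _ _ (ne_of_gt hB) (ne_of_gt hA), neg_le, ← neg_div,
      div_le_div_iff₀ (by positivity) (by positivity)]
    nlinarith [mul_nonneg ha0 h2, mul_nonneg hτ0 (mul_nonneg ha0 ha0)]
  · rw [div_sub_div _ _ (ne_of_gt hB) (ne_of_gt hA),
      div_le_div_iff₀ (by positivity) (by positivity)]
    nlinarith [mul_nonneg ha0 h1, mul_nonneg hτ0 (mul_nonneg ha0 ha0)]
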